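/- Let S, K be subrings of a finite ring R with Z(S,K) ≠ S. Then Pr(S,K) ≥ (1/|[S,K]|)·(1 + (|[S,K]|-1)/|S:Z(S,K)|) > 1/|[S,K]|, where [S,K] is the additive subgroup generated by {sk-ks : s∈S, k∈K}. -/

import Mathlib

/-- `Pr_r(S,K)`: the probability that a uniformly random pair `(s,k) ∈ S × K`
satisfies `s*k - k*s = r`. -/
noncomputable def ringPr {R : Type*} [NonUnitalRing R] [Fintype R]
    (S K : NonUnitalSubring R) (r : R) : ℚ :=
  (Nat.card {p : R × R // p.1 ∈ S ∧ p.2 ∈ K ∧ p.1 * p.2 - p.2 * p.1 = r} : ℚ) /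
    ((Nat.card S : ℚ) * (Nat.card K : ℚ))

private def commHom {R : Type*} [NonUnitalRing R] (K : NonUnitalSubring R) (s : R) :
    ↥K →+ R where
  toFun k := s * k - k * s
  map_zero' := by simp
  map_add' a b := by
    push_cast
    rw [mul_add, add_mul]
    abel

private lemma key_count {R : Type*} [NonUnitalRing R] [Fintype R] (K : NonUnitalSubring R)
    (C : AddSubgroup R)
    (s : R)
    (hsub : ∀ k : R, k ∈ K → s * k - k * s ∈ C) :
    Nat.card K ≤ Nat.card C * Nat.card {k : ↥K // s * (k : R) = (k : R) * s} := by
  classical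
  set φ := commHom K s with hφ
  have hker : Nat.card φ.ker = Nat.card {k : ↥K // s * (k : R) = (k : R) * s} := by
    apply Nat.card_congr
    apply Equiv.subtypeEquivRight
    intro k
    show s * k - k * s = 0 ↔ _
    rw [sub_eq_zero]
  have hcard : Nat.card ↥K = Nat.card φ.range * Nat.card φ.ker := by
    rw [AddSubgroup.card_eq_card_quotient_mul_card_addSubgroup φ.ker]
    congr 1
    exact Nat.card_congr (QuotientAddGroup.quotientKerEquivRange φ).toEquiv
  have hle : Nat.card φ.range ≤ Nat.card C := by
    apply AddSubgroup.card_le_of_le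
    rintro x ⟨k, rfl⟩
    exact hsub k k.2
  calc Nat.card ↥K = Nat.card φ.range * Nat.card φ.ker := hcard
    _ ≤ Nat.card C * Nat.card φ.ker := Nat.mul_le_mul_right _ hle
    _ = _ := by rw [hker]

theorem ringPr_gt_inv_card_commutator {R : Type*} [NonUnitalRing R] [Fintype R]
    (S K : NonUnitalSubring R) (h : ∃ s ∈ S, ∃ k ∈ K, s * k ≠ k * s) :
    ringPr S K 0 ≥
        (1 / (Nat.card (AddSubgroup.closure {x : R | ∃ s ∈ S, ∃ k ∈ K, s * k - k * s = x}) : ℚ)) *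
          (1 + ((Nat.card (AddSubgroup.closure {x : R | ∃ s ∈ S, ∃ k ∈ K, s * k - k * s = x}) : ℚ) - 1) /
            ((Nat.card S : ℚ) / (Nat.card {s : R // s ∈ S ∧ ∀ k ∈ K, s * k = k * s} : ℚ))) ∧
      (1 / (Nat.card (AddSubgroup.closure {x : R | ∃ s ∈ S, ∃ k ∈ K, s * k - k * s = x}) : ℚ)) *
          (1 + ((Nat.card (AddSubgroup.closure {x : R | ∃ s ∈ S, ∃ k ∈ K, s * k - k * s = x}) : ℚ) - 1) /
            ((Nat.card S : ℚ) / (Nat.card {s : R // s ∈ S ∧ ∀ k ∈ K, s * k = k * s} : ℚ))) >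
        1 / (Nat.card (AddSubgroup.closure {x : R | ∃ s ∈ S, ∃ k ∈ K, s * k - k * s = x}) : ℚ) := by
  classical
  set C := AddSubgroup.closure {x : R | ∃ s ∈ S, ∃ k ∈ K, s * k - k * s = x} with hCdef
  set c := Nat.card C with hc
  set n := Nat.card S with hn
  set m := Nat.card K with hm
  set z := Nat.card {s : R // s ∈ S ∧ ∀ k ∈ K, s * k = k * s} with hz
  set N := Nat.card {p : R × R // p.1 ∈ S ∧ p.2 ∈ K ∧ p.1 * p.2 - p.2 * p.1 = (0:R)} with hN
  -- C contains all commutators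
  have hsub : ∀ s k : R, s ∈ S → k ∈ K → s * k - k * s ∈ C :=
    fun s k hs hk => AddSubgroup.subset_closure ⟨s, hs, k, hk, rfl⟩
  -- c ≥ 2
  have hc2 : 2 ≤ c := by
    obtain ⟨s, hs, k, hk, hne⟩ := h
    have : Nontrivial ↥C := ⟨⟨⟨s * k - k * s, hsub s k hs hk⟩, 0, by
      simp only [ne_eq, Subtype.ext_iff]
      exact sub_ne_zero.mpr hne⟩⟩
    exact Finite.one_lt_card
  -- positivity of cardinals
  have hnpos : 0 < n := Nat.card_pos
  have hmpos : 0 < m := Nat.card_pos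
  have hzpos : 0 < z := by
    have : Nonempty {s : R // s ∈ S ∧ ∀ k ∈ K, s * k = k * s} :=
      ⟨⟨0, S.zero_mem, fun k _ => by simp⟩⟩
    exact Nat.card_pos
  have hzn : z ≤ n := by
    apply Nat.card_le_card_of_injective (fun x => (⟨x.1, x.2.1⟩ : ↥S))
    intro a b hab
    simpa [Subtype.ext_iff] using hab
  -- N as a sum over s : S
  have e : {p : R × R // p.1 ∈ S ∧ p.2 ∈ K ∧ p.1 * p.2 - p.2 * p.1 = (0:R)} ≃
      Σ s : ↥S, {k : ↥K // (s : R) * k = (k : R) * s} :=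
    { toFun := fun p => ⟨⟨p.1.1, p.2.1⟩, ⟨⟨p.1.2, p.2.2.1⟩, sub_eq_zero.mp p.2.2.2⟩⟩
      invFun := fun q => ⟨(q.1, q.2.1), q.1.2, q.2.1.2, sub_eq_zero.mpr q.2.2⟩
      left_inv := fun p => rfl
      right_inv := fun q => rfl }
  have hNsum : N = ∑ s : ↥S, Nat.card {k : ↥K // (s : R) * k = (k : R) * s} := by
    rw [hN, Nat.card_congr e, Nat.card_eq_fintype_card, Fintype.card_sigma]
    simp [Nat.card_eq_fintype_card]
  -- central elements
  set Zs : Finset ↥S := Finset.univ.filter (fun s : ↥S => ∀ k ∈ K, (s : R) * k = k * (s : R))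
    with hZs
  have hzZ : z = Zs.card := by
    rw [hz, Nat.card_congr
      (Equiv.subtypeSubtypeEquivSubtypeInter (· ∈ S) (fun s => ∀ k ∈ K, s * k = k * s)).symm,
      Nat.card_eq_fintype_card, Fintype.card_subtype, hZs]
  -- key inequality: m * n + (c-1) * z * m ≤ c * N
  have hkey : m * n + (c - 1) * z * m ≤ c * N := by
    have hsplit : ∑ s : ↥S, c * Nat.card {k : ↥K // (s : R) * k = (k : R) * s}
        = ∑ s ∈ Zs, c * Nat.card {k : ↥K // (s : R) * k = (k : R) * s}
          + ∑ s ∈ Zsᶜ, c * Nat.card {k : ↥K // (s : R) * k = (k : R) * s} :=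
      (Finset.sum_add_sum_compl Zs _).symm
    have h1 : ∀ s ∈ Zs, c * m ≤ c * Nat.card {k : ↥K // (s : R) * k = (k : R) * s} := by
      intro s hs
      simp only [hZs, Finset.mem_filter] at hs
      apply Nat.mul_le_mul_left
      apply le_of_eq
      rw [hm]
      exact Nat.card_congr (Equiv.subtypeUnivEquiv (fun (k : ↥K) => hs.2 (k:R) k.2)).symm
    have h2 : ∀ s ∈ Zsᶜ, m ≤ c * Nat.card {k : ↥K // (s : R) * k = (k : R) * s} :=
      fun s _ => key_count K C s (fun k hk => hsub (s:R) k s.2 hk)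
    have hb1 : Zs.card * (c * m) ≤ ∑ s ∈ Zs, c * Nat.card {k : ↥K // (s : R) * k = (k : R) * s} := by
      calc Zs.card * (c * m) = Zs.card • (c * m) := (smul_eq_mul _ _).symm
        _ ≤ _ := Finset.card_nsmul_le_sum _ _ _ h1
    have hb2 : Zsᶜ.card * m ≤ ∑ s ∈ Zsᶜ, c * Nat.card {k : ↥K // (s : R) * k = (k : R) * s} := by
      calc Zsᶜ.card * m = Zsᶜ.card • m := (smul_eq_mul _ _).symm
        _ ≤ _ := Finset.card_nsmul_le_sum _ _ _ h2
    have hcompl : Zsᶜ.card = n - z := by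
      rw [Finset.card_compl, hzZ, hn, Nat.card_eq_fintype_card]
    have htot : z * (c * m) + (n - z) * m ≤ c * N := by
      rw [hNsum, Finset.mul_sum, hsplit]
      exact Nat.add_le_add (hzZ ▸ hb1) (hcompl ▸ hb2)
    refine le_trans (le_of_eq ?_) htot
    have h1c : 1 ≤ c := by omega
    zify [hzn, h1c]
    ring
  -- to rationals
  have hQ : (m : ℚ) * n + ((c : ℚ) - 1) * z * m ≤ (c : ℚ) * N := by
    have := hkey
    have h1c : 1 ≤ c := by omega
    calc (m : ℚ) * n + ((c : ℚ) - 1) * z * m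
        = ((m * n + (c - 1) * z * m : ℕ) : ℚ) := by
          push_cast [Nat.cast_sub h1c]; ring
      _ ≤ ((c * N : ℕ) : ℚ) := by exact_mod_cast this
      _ = (c : ℚ) * N := by push_cast; ring
  have hcQ : (0:ℚ) < (c:ℚ) := by exact_mod_cast Nat.lt_of_lt_of_le Nat.zero_lt_two hc2
  have hnQ : (0:ℚ) < (n:ℚ) := by exact_mod_cast hnpos
  have hmQ : (0:ℚ) < (m:ℚ) := by exact_mod_cast hmpos
  have hzQ : (0:ℚ) < (z:ℚ) := by exact_mod_cast hzpos
  have hRHS : (1 / (c:ℚ)) * (1 + ((c:ℚ) - 1) / ((n:ℚ) / (z:ℚ)))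
      = ((m:ℚ) * n + ((c:ℚ) - 1) * z * m) / ((c:ℚ) * (n * m)) := by
    field_simp
  have hPr : ringPr S K 0 = (N : ℚ) / ((n:ℚ) * (m:ℚ)) := rfl
  constructor
  · rw [hPr, hRHS, ge_iff_le, div_le_div_iff₀ (by positivity) (by positivity)]
    nlinarith [mul_le_mul_of_nonneg_right hQ (le_of_lt (mul_pos hnQ hmQ))]
  · rw [gt_iff_lt]
    have hpos : 0 < ((c:ℚ) - 1) / ((n:ℚ) / (z:ℚ)) := by
      apply div_pos
      · have : (2:ℚ) ≤ (c:ℚ) := by exact_mod_cast hc2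
        linarith
      · positivity
    calc 1 / (c:ℚ) = 1 / (c:ℚ) * 1 := (mul_one _).symm
      _ < _ := by
        apply mul_lt_mul_of_pos_left _ (by positivity)
        linarith
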